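/- arXiv:2603.01698 — 3 statements merged into one kernel-verified Lean document; each statement's English description precedes it below -/
import Mathlib

section
/- Let X be a compact metric space and k a universal kernel on X (its RKHS H is dense in C(X) with the supremum norm). If the mean embeddings of two Borel probability measures P and Q on X coincide, μ_P = μ_Q, then P = Q. -/
open MeasureTheory
open scoped RealInnerProductSpace

theorem stmt2_aux {X : Type*} [MetricSpace X] [CompactSpace X]
    [MeasurableSpace X] [BorelSpace X] {E : Type*} [NormedAddCommGroup E]
    (g : X → E) (hg : Continuous g) (μ : Measure X) [IsFiniteMeasure μ] :
    Integrable g μ :=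
  integrableOn_univ.mp (hg.continuousOn.integrableOn_compact isCompact_univ)

/-- For a universal kernel (RKHS dense in `C(X)` for the sup norm) on a compact metric
space, equality of mean embeddings implies equality of the Borel probability measures. -/
theorem stmt_2 {X : Type*} [MetricSpace X] [CompactSpace X]
    [MeasurableSpace X] [BorelSpace X]
    {H : Type*} [NormedAddCommGroup H] [InnerProductSpace ℝ H] [CompleteSpace H]
    (φ : X → H) (hφ : Continuous φ)
    (hdense : DenseRange (fun f : H =>
      (⟨fun x => ⟪f, φ x⟫, (continuous_const.inner hφ)⟩ : C(X, ℝ))))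
    (P Q : Measure X) [IsProbabilityMeasure P] [IsProbabilityMeasure Q]
    (h : (∫ x, φ x ∂P) = ∫ x, φ x ∂Q) :
    P = Q := by
  have hφP : Integrable φ P := stmt2_aux φ hφ P
  have hφQ : Integrable φ Q := stmt2_aux φ hφ Q
  -- integrals agree on the dense range
  have key : ∀ g : C(X, ℝ), ∫ x, g x ∂P = ∫ x, g x ∂Q := by
    have hclosed : IsClosed {g : C(X, ℝ) | ∫ x, g x ∂P = ∫ x, g x ∂Q} := by
      have hc : ∀ (μ : Measure X) [IsProbabilityMeasure μ],
          Continuous fun g : C(X, ℝ) => ∫ x, g x ∂μ := by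
        intro μ _
        apply continuous_iff_continuousAt.2
        intro g
        have : ∀ g₁ g₂ : C(X, ℝ), |∫ x, g₁ x ∂μ - ∫ x, g₂ x ∂μ| ≤ dist g₁ g₂ := by
          intro g₁ g₂
          have hint : ∀ g' : C(X, ℝ), Integrable (fun x => g' x) μ :=
            fun g' => stmt2_aux _ g'.continuous μ
          rw [← integral_sub (hint g₁) (hint g₂)]
          calc |∫ x, (g₁ x - g₂ x) ∂μ| ≤ ∫ x, |g₁ x - g₂ x| ∂μ := by
                simpa [Real.norm_eq_abs] using
                  norm_integral_le_integral_norm (fun x => g₁ x - g₂ x) (μ := μ)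
            _ ≤ ∫ _x, dist g₁ g₂ ∂μ := by
                apply integral_mono ((hint g₁).sub (hint g₂)).abs (integrable_const _)
                intro x
                simpa [Real.dist_eq] using ContinuousMap.dist_apply_le_dist (f := g₁) (g := g₂) x
            _ = dist g₁ g₂ := by simp
        have hlip : LipschitzWith 1 fun g : C(X, ℝ) => ∫ x, g x ∂μ := by
          intro g₁ g₂
          simpa [Real.dist_eq, edist_dist] using
            (this g₁ g₂)
        exact hlip.continuous.continuousAt
      exact isClosed_eq (hc P) (hc Q)
    have hsub : Set.range (fun f : H =>
        (⟨fun x => ⟪f, φ x⟫, (continuous_const.inner hφ)⟩ : C(X, ℝ))) ⊆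
        {g : C(X, ℝ) | ∫ x, g x ∂P = ∫ x, g x ∂Q} := by
      rintro _ ⟨f, rfl⟩
      simp only [Set.mem_setOf_eq, ContinuousMap.coe_mk]
      rw [integral_inner hφP f, integral_inner hφQ f, h]
    intro g
    exact closure_minimal hsub hclosed (hdense g)
  -- conclude via lintegrals of bounded continuous ℝ≥0 functions
  apply ext_of_forall_lintegral_eq_of_IsFiniteMeasure
  intro f
  have hcont : Continuous fun x => (f x : ℝ) := NNReal.continuous_coe.comp f.continuous
  have hintP : Integrable (fun x => (f x : ℝ)) P := stmt2_aux _ hcont P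
  have hintQ : Integrable (fun x => (f x : ℝ)) Q := stmt2_aux _ hcont Q
  rw [lintegral_coe_eq_integral _ hintP, lintegral_coe_eq_integral _ hintQ]
  exact congrArg ENNReal.ofReal (key ⟨fun x => (f x : ℝ), hcont⟩)
end

section
/- Fix α ∈ (0,1), a finite nonnegative measure μ on ℝ^d, and probability measures P, Q on ℝ^d with characteristic functions written in polar form φ_P(t) = a(t)e^{iθ_P(t)}, φ_Q(t) = b(t)e^{iθ_Q(t)}. Define d(P,Q) = ∫ [α·(a(t)−b(t))² + 2(1−α)·a(t)b(t)(1 − cos(θ_P(t)−θ_Q(t)))] dμ(t). If μ has strictly positive Lebesgue density and d(P,Q) = 0, then P = Q. -/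
open MeasureTheory
open scoped RealInnerProductSpace

noncomputable section CharAux

open FourierTransform Metric Filter Set
open scoped ContDiff Manifold

variable {d : ℕ}

local notation "V" => EuclideanSpace ℝ (Fin d)

/-- The characteristic function of a measure. -/
def myChar (P : Measure V) (t : V) : ℂ := ∫ x, Complex.exp (Complex.I * (⟪t, x⟫ : ℝ)) ∂P

lemma myChar_continuous (P : Measure V) [IsProbabilityMeasure P] :
    Continuous (myChar P) := by
  apply continuous_of_dominated (bound := fun _ => 1)
  · intro t
    exact (Complex.continuous_exp.comp (continuous_const.mul
      (Complex.continuous_ofReal.comp (continuous_const.inner continuous_id)))).aestronglyMeasurable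
  · intro t
    filter_upwards with x
    simp [Complex.norm_exp]
  · exact integrable_const 1
  · filter_upwards with x
    exact Complex.continuous_exp.comp (continuous_const.mul
      (Complex.continuous_ofReal.comp (continuous_id.inner continuous_const)))

lemma norm_polar (A B t1 t2 : ℝ) :
    ‖(A : ℂ) * Complex.exp (Complex.I * t1) - (B : ℂ) * Complex.exp (Complex.I * t2)‖ ^ 2
      = (A - B) ^ 2 + 2 * A * B * (1 - Real.cos (t1 - t2)) := by
  rw [mul_comm Complex.I (t1 : ℂ), mul_comm Complex.I (t2 : ℂ)]
  have hz : ∀ z : ℂ, ‖z‖ ^ 2 = z.re ^ 2 + z.im ^ 2 := by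
    intro z
    rw [Complex.sq_norm, Complex.normSq_apply]; ring
  rw [hz]
  simp only [Complex.sub_re, Complex.sub_im, Complex.mul_re, Complex.mul_im,
    Complex.ofReal_re, Complex.ofReal_im, Complex.exp_ofReal_mul_I_re,
    Complex.exp_ofReal_mul_I_im, Real.cos_sub]
  linear_combination (A ^ 2) * Real.cos_sq_add_sin_sq t1 + (B ^ 2) * Real.cos_sq_add_sin_sq t2

/-- Build a Schwartz map from a smooth compactly supported function. -/
def mkSchwartz (f : V → ℂ) (h1 : ContDiff ℝ ∞ f) (h2 : HasCompactSupport f) :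
    SchwartzMap (EuclideanSpace ℝ (Fin d)) ℂ where
  toFun := f
  smooth' := h1
  decay' := by
    intro k n
    have hcont : Continuous fun x : V => ‖x‖ ^ k * ‖iteratedFDeriv ℝ n f x‖ :=
      (continuous_norm.pow k).mul
        (ContDiff.continuous_iteratedFDeriv (by exact_mod_cast le_top) h1).norm
    have hsupp : HasCompactSupport fun x : V => ‖x‖ ^ k * ‖iteratedFDeriv ℝ n f x‖ := by
      have h3 : HasCompactSupport fun x : V => ‖iteratedFDeriv ℝ n f x‖ :=
        (h2.iteratedFDeriv n).comp_left (g := fun y => ‖y‖) norm_zero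
      exact HasCompactSupport.mul_left h3
    obtain ⟨C, hC⟩ := hcont.bounded_above_of_compact_support hsupp
    exact ⟨C, fun x => (Real.le_norm_self _).trans (hC x)⟩

lemma integral_schwartz_eq (P Q : Measure V) [IsProbabilityMeasure P] [IsProbabilityMeasure Q]
    (hφ : ∀ v : V, (∫ x, Complex.exp ((2 * Real.pi * ⟪v, x⟫ : ℝ) * Complex.I) ∂P)
      = ∫ x, Complex.exp ((2 * Real.pi * ⟪v, x⟫ : ℝ) * Complex.I) ∂Q)
    (g : SchwartzMap (EuclideanSpace ℝ (Fin d)) ℂ) :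
    ∫ x, g x ∂P = ∫ x, g x ∂Q := by
  have hFg_int : Integrable (𝓕 ⇑g) volume := by
    rw [← SchwartzMap.fourier_coe, ← SchwartzMap.fourierTransformCLM_apply ℂ g]
    exact (SchwartzMap.fourierTransformCLM ℂ g).integrable
  have hFg_cont : Continuous (𝓕 ⇑g) := by
    rw [← SchwartzMap.fourier_coe, ← SchwartzMap.fourierTransformCLM_apply ℂ g]
    exact (SchwartzMap.fourierTransformCLM ℂ g).continuous
  have hinv : ∀ x : V,
      (∫ v : V, Complex.exp ((2 * Real.pi * ⟪v, x⟫ : ℝ) * Complex.I) * (𝓕 ⇑g v) ∂volume)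
        = g x := by
    intro x
    have h := g.continuous.fourierInv_fourier_eq g.integrable hFg_int
    have h2 := congrFun h x
    rw [Real.fourierInv_eq'] at h2
    simpa [smul_eq_mul] using h2
  have key : ∀ (R : Measure V), IsProbabilityMeasure R →
      ∫ x, g x ∂ R = ∫ v : V,
        (∫ x, Complex.exp ((2 * Real.pi * ⟪v, x⟫ : ℝ) * Complex.I) ∂ R) * (𝓕 ⇑g v) ∂volume := by
    intro R hR
    have hker : Continuous fun z : V × V =>
        Complex.exp ((2 * Real.pi * ⟪z.2, z.1⟫ : ℝ) * Complex.I) := by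
      apply Complex.continuous_exp.comp
      exact (Complex.continuous_ofReal.comp
        (continuous_const.mul (continuous_snd.inner continuous_fst))).mul continuous_const
    have hint : Integrable (Function.uncurry fun (x : V) (v : V) =>
        Complex.exp ((2 * Real.pi * ⟪v, x⟫ : ℝ) * Complex.I) * (𝓕 ⇑g v)) (R.prod volume) := by
      have hmeas : AEStronglyMeasurable (Function.uncurry fun (x : V) (v : V) =>
          Complex.exp ((2 * Real.pi * ⟪v, x⟫ : ℝ) * Complex.I) * (𝓕 ⇑g v)) (R.prod volume) :=
        (hker.mul (hFg_cont.comp continuous_snd)).aestronglyMeasurable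
      rw [integrable_prod_iff hmeas]
      constructor
      · filter_upwards with x
        exact hFg_int.bdd_mul (c := 1)
          (Complex.continuous_exp.comp ((Complex.continuous_ofReal.comp
            (continuous_const.mul (continuous_id.inner continuous_const))).mul
            continuous_const)).aestronglyMeasurable
          (ae_of_all _ fun v => by rw [Complex.norm_exp_ofReal_mul_I])
      · apply Integrable.congr (integrable_const (∫ v : V, ‖𝓕 ⇑g v‖ ∂volume))
        filter_upwards with x
        congr 1
        funext v
        rw [Function.uncurry_apply_pair, norm_mul, Complex.norm_exp_ofReal_mul_I, one_mul]
    calc ∫ x, g x ∂ R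
        = ∫ x, ∫ v : V, Complex.exp ((2 * Real.pi * ⟪v, x⟫ : ℝ) * Complex.I) * (𝓕 ⇑g v)
            ∂volume ∂ R := by
          apply integral_congr_ae
          filter_upwards with x
          exact (hinv x).symm
      _ = ∫ v : V, ∫ x, Complex.exp ((2 * Real.pi * ⟪v, x⟫ : ℝ) * Complex.I) * (𝓕 ⇑g v)
            ∂ R ∂volume := integral_integral_swap hint
      _ = ∫ v : V, (∫ x, Complex.exp ((2 * Real.pi * ⟪v, x⟫ : ℝ) * Complex.I) ∂ R)
            * (𝓕 ⇑g v) ∂volume := by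
          congr 1
          funext v
          simpa [smul_eq_mul] using
            integral_smul_const (μ := R)
              (fun x : V => Complex.exp ((2 * Real.pi * ⟪v, x⟫ : ℝ) * Complex.I)) (𝓕 ⇑g v)
  rw [key P inferInstance, key Q inferInstance]
  congr 1
  funext v
  rw [hφ v]

lemma real_integral_eq (P Q : Measure V) [IsProbabilityMeasure P] [IsProbabilityMeasure Q]
    (hS : ∀ g : SchwartzMap (EuclideanSpace ℝ (Fin d)) ℂ, ∫ x, g x ∂P = ∫ x, g x ∂Q)
    (f : V → ℝ) (h1 : ContDiff ℝ ∞ f) (h2 : HasCompactSupport f) :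
    ∫ x, f x ∂P = ∫ x, f x ∂Q := by
  have h1' : ContDiff ℝ ∞ fun x : V => (f x : ℂ) :=
    Complex.ofRealCLM.contDiff.comp h1
  have h2' : HasCompactSupport fun x : V => (f x : ℂ) :=
    h2.comp_left (g := fun y : ℝ => (y : ℂ)) Complex.ofReal_zero
  have := hS (mkSchwartz (fun x => (f x : ℂ)) h1' h2')
  have hcoe : ∀ (R : Measure V), ∫ x, ((mkSchwartz (fun x => (f x : ℂ)) h1' h2') x) ∂ R
      = ((∫ x, f x ∂ R : ℝ) : ℂ) := by
    intro R
    rw [show (⇑(mkSchwartz (fun x => (f x : ℂ)) h1' h2')) = fun x : V => (f x : ℂ) from rfl]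
    exact integral_ofReal
  rw [hcoe P, hcoe Q] at this
  exact_mod_cast this

lemma compact_le (P Q : Measure V) [IsProbabilityMeasure P] [IsProbabilityMeasure Q]
    (hreal : ∀ f : V → ℝ, ContDiff ℝ ∞ f → HasCompactSupport f →
      ∫ x, f x ∂P = ∫ x, f x ∂Q)
    {K : Set V} (hK : IsCompact K) : Q K ≤ P K := by
  have main : ∀ δ ∈ Set.Ioi (0 : ℝ), Q K ≤ P (cthickening δ K) := by
    intro δ hδ
    obtain ⟨f, hf0, hf1, hf01⟩ :=
      exists_contMDiffMap_zero_one_of_isClosed (n := ⊤) (𝓘(ℝ, EuclideanSpace ℝ (Fin d)))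
        (isOpen_thickening (δ := δ) (E := K)).isClosed_compl hK.isClosed
        (disjoint_compl_left.mono_right (self_subset_thickening hδ K))
    have hfc : ContDiff ℝ ∞ ⇑f := by
      have := f.contMDiff
      rw [contMDiff_iff_contDiff] at this
      exact_mod_cast this
    have hsupp : Function.support ⇑f ⊆ thickening δ K := by
      intro x hx
      by_contra h
      exact hx (hf0 h)
    have hcs : HasCompactSupport ⇑f :=
      IsCompact.of_isClosed_subset (hK.cthickening (r := δ)) isClosed_closure
        ((closure_mono hsupp).trans (closure_thickening_subset_cthickening δ K))
    have hint : ∫ x, f x ∂P = ∫ x, f x ∂Q := hreal f hfc hcs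
    have hfint : ∀ (R : Measure V), IsProbabilityMeasure R → Integrable (⇑f) R :=
      fun R hR => hfc.continuous.integrable_of_hasCompactSupport hcs
    have hlow : (Q K).toReal ≤ ∫ x, f x ∂Q := by
      rw [← measureReal_def, ← integral_indicator_one hK.isClosed.measurableSet]
      apply integral_mono ((integrable_const (1:ℝ)).indicator hK.isClosed.measurableSet)
        (hfint Q inferInstance)
      intro x
      by_cases hx : x ∈ K
      · simp [Set.indicator_of_mem hx, hf1 hx]
      · simp only [Set.indicator_of_notMem hx]
        exact (hf01 x).1
    have hmeasct : MeasurableSet (cthickening δ K) :=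
      (isClosed_cthickening).measurableSet
    have hhigh : ∫ x, f x ∂P ≤ (P (cthickening δ K)).toReal := by
      rw [← measureReal_def, ← integral_indicator_one hmeasct]
      apply integral_mono (hfint P inferInstance)
        ((integrable_const (1:ℝ)).indicator hmeasct)
      intro x
      by_cases hx : x ∈ cthickening δ K
      · simpa [Set.indicator_of_mem hx] using (hf01 x).2
      · have hx' : x ∉ thickening δ K := fun h => hx (thickening_subset_cthickening δ K h)
        simp [Set.indicator_of_notMem hx, hf0 hx']
    have : (Q K).toReal ≤ (P (cthickening δ K)).toReal := by
      calc (Q K).toReal ≤ ∫ x, f x ∂Q := hlow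
        _ = ∫ x, f x ∂P := hint.symm
        _ ≤ (P (cthickening δ K)).toReal := hhigh
    exact (ENNReal.toReal_le_toReal (measure_ne_top Q K) (measure_ne_top P _)).mp this
  have htend : Tendsto (fun δ => P (cthickening δ K)) (nhdsWithin 0 (Set.Ioi 0)) (nhds (P K)) :=
    (tendsto_measure_cthickening_of_isClosed
      ⟨1, one_pos, measure_ne_top P _⟩ hK.isClosed).mono_left nhdsWithin_le_nhds
  exact ge_of_tendsto htend (eventually_nhdsWithin_of_forall main)

lemma measures_eq (P Q : Measure V) [IsProbabilityMeasure P] [IsProbabilityMeasure Q]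
    (hreal : ∀ f : V → ℝ, ContDiff ℝ ∞ f → HasCompactSupport f →
      ∫ x, f x ∂P = ∫ x, f x ∂Q) : P = Q := by
  have hcompact : ∀ {K : Set V}, IsCompact K → P K = Q K := by
    intro K hK
    exact le_antisymm (compact_le Q P (fun f h1 h2 => (hreal f h1 h2).symm) hK)
      (compact_le P Q hreal hK)
  have hclosed : ∀ F : Set V, IsClosed F → P F = Q F := by
    intro F hF
    have hcpt : ∀ n : ℕ, P (F ∩ closedBall (0 : V) n) = Q (F ∩ closedBall (0 : V) n) :=
      fun n => hcompact ((isCompact_closedBall (0 : V) n).inter_left hF)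
    have hmono : Monotone fun n : ℕ => F ∩ closedBall (0 : V) n := by
      intro m n hmn
      exact Set.inter_subset_inter_right F (closedBall_subset_closedBall (by exact_mod_cast hmn))
    have hun : (⋃ n : ℕ, F ∩ closedBall (0 : V) n) = F := by
      ext x
      simp only [Set.mem_iUnion, Set.mem_inter_iff, mem_closedBall, dist_zero_right]
      constructor
      · rintro ⟨n, hxF, _⟩; exact hxF
      · intro hxF
        obtain ⟨n, hn⟩ := exists_nat_ge ‖x‖
        exact ⟨n, hxF, hn⟩
    have h1 := tendsto_measure_iUnion_atTop (μ := P) hmono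
    have h2 := tendsto_measure_iUnion_atTop (μ := Q) hmono
    rw [hun] at h1 h2
    have h1' : Tendsto (fun n : ℕ => P (F ∩ closedBall (0 : V) n)) atTop (nhds (P F)) := h1
    have h2' : Tendsto (fun n : ℕ => P (F ∩ closedBall (0 : V) n)) atTop (nhds (Q F)) := by
      apply h2.congr
      intro n
      exact (hcpt n).symm
    exact tendsto_nhds_unique h1' h2'
  apply MeasureTheory.ext_of_generate_finite {s : Set V | IsClosed s}
    (by rw [BorelSpace.measurable_eq (α := V), borel_eq_generateFrom_isClosed])
    isPiSystem_isClosed (fun s hs => hclosed s hs)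
  simp [measure_univ]

end CharAux

/-- Class-aware amplitude–phase discrepancy: if the weighted amplitude–phase
discrepancy between the characteristic functions of `P` and `Q` (in polar form)
vanishes, and the spectral measure has strictly positive Lebesgue density, then
`P = Q`. -/
theorem stmt_14 {d : ℕ} (α : ℝ) (hα : α ∈ Set.Ioo (0 : ℝ) 1)
    (p : EuclideanSpace ℝ (Fin d) → ℝ) (hp : ∀ t, 0 < p t) (hpm : Measurable p)
    (μ : Measure (EuclideanSpace ℝ (Fin d)))
    (hμ : μ = volume.withDensity (fun t => ENNReal.ofReal (p t)))
    (P Q : Measure (EuclideanSpace ℝ (Fin d)))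
    [IsProbabilityMeasure P] [IsProbabilityMeasure Q]
    (a b θP θQ : EuclideanSpace ℝ (Fin d) → ℝ)
    (ha0 : ∀ t, 0 ≤ a t) (hb0 : ∀ t, 0 ≤ b t)
    (haP : ∀ t, (∫ x, Complex.exp (Complex.I * (⟪t, x⟫ : ℝ)) ∂P) =
      (a t : ℂ) * Complex.exp (Complex.I * (θP t : ℝ)))
    (hbQ : ∀ t, (∫ x, Complex.exp (Complex.I * (⟪t, x⟫ : ℝ)) ∂Q) =
      (b t : ℂ) * Complex.exp (Complex.I * (θQ t : ℝ)))
    (hzero : (∫⁻ t, ENNReal.ofReal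
        (α * (a t - b t) ^ 2 +
          2 * (1 - α) * a t * b t * (1 - Real.cos (θP t - θQ t))) ∂μ) = 0) :
    P = Q := by
  obtain ⟨hα0, hα1⟩ := hα
  set c := min α (1 - α) with hc
  have hcpos : 0 < c := lt_min hα0 (by linarith)
  have hgP := myChar_continuous P
  have hgQ := myChar_continuous Q
  have hcont : Continuous fun t => myChar P t - myChar Q t := hgP.sub hgQ
  have hpoint : ∀ t, c * ‖myChar P t - myChar Q t‖ ^ 2 ≤
      α * (a t - b t) ^ 2 + 2 * (1 - α) * a t * b t * (1 - Real.cos (θP t - θQ t)) := by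
    intro t
    rw [show myChar P t = (a t : ℂ) * Complex.exp (Complex.I * (θP t : ℝ)) from haP t,
      show myChar Q t = (b t : ℂ) * Complex.exp (Complex.I * (θQ t : ℝ)) from hbQ t,
      norm_polar]
    have h1 : 0 ≤ (a t - b t) ^ 2 := sq_nonneg _
    have h2 : 0 ≤ a t * b t * (1 - Real.cos (θP t - θQ t)) :=
      mul_nonneg (mul_nonneg (ha0 t) (hb0 t))
        (by nlinarith [Real.cos_le_one (θP t - θQ t)])
    have hca : c ≤ α := min_le_left _ _
    have hcb : c ≤ 1 - α := min_le_right _ _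
    nlinarith
  have hmeas : Measurable fun t => ENNReal.ofReal (c * ‖myChar P t - myChar Q t‖ ^ 2) :=
    (continuous_const.mul (hcont.norm.pow 2)).measurable.ennreal_ofReal
  have h0 : ∫⁻ t, ENNReal.ofReal (c * ‖myChar P t - myChar Q t‖ ^ 2) ∂μ = 0 :=
    le_antisymm (hzero ▸ lintegral_mono fun t => ENNReal.ofReal_le_ofReal (hpoint t))
      (zero_le')
  rw [hμ, lintegral_withDensity_eq_lintegral_mul _ hpm.ennreal_ofReal hmeas] at h0
  have hae := (lintegral_eq_zero_iff (hpm.ennreal_ofReal.mul hmeas)).mp h0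
  have haeq : (fun t => myChar P t) =ᵐ[(volume : Measure (EuclideanSpace ℝ (Fin d)))]
      fun t => myChar Q t := by
    filter_upwards [hae] with t ht
    simp only [Pi.mul_apply, Pi.zero_apply, mul_eq_zero] at ht
    rcases ht with h | h
    · rw [ENNReal.ofReal_eq_zero] at h
      exact absurd h (not_le.mpr (hp t))
    · rw [ENNReal.ofReal_eq_zero] at h
      have hn : ‖myChar P t - myChar Q t‖ = 0 := by
        by_contra hne
        have hpos : 0 < ‖myChar P t - myChar Q t‖ :=
          lt_of_le_of_ne (norm_nonneg _) (Ne.symm hne)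
        nlinarith [mul_pos hcpos (pow_pos hpos 2)]
      exact sub_eq_zero.mp (norm_eq_zero.mp hn)
  have hφ : ∀ t, myChar P t = myChar Q t :=
    congrFun ((Continuous.ae_eq_iff_eq volume hgP hgQ).mp haeq)
  have hφ' : ∀ v : EuclideanSpace ℝ (Fin d),
      (∫ x, Complex.exp ((2 * Real.pi * ⟪v, x⟫ : ℝ) * Complex.I) ∂P)
        = ∫ x, Complex.exp ((2 * Real.pi * ⟪v, x⟫ : ℝ) * Complex.I) ∂Q := by
    intro v
    have hval := hφ ((2 * Real.pi) • v)
    unfold myChar at hval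
    have hrw : ∀ x : EuclideanSpace ℝ (Fin d),
        Complex.exp ((2 * Real.pi * ⟪v, x⟫ : ℝ) * Complex.I)
          = Complex.exp (Complex.I * (⟪(2 * Real.pi) • v, x⟫ : ℝ)) := by
      intro x
      rw [real_inner_smul_left]
      ring_nf
    simp_rw [hrw]
    exact hval
  exact measures_eq P Q (real_integral_eq P Q (integral_schwartz_eq P Q hφ'))
end

section
/- Let k(x,y) = exp(−‖x−y‖²/(2σ²)) be the Gaussian kernel on ℝ^d and let P, Q be probability measures with all moments finite and sufficiently integrable for term-by-term integration. Define weighted moments m_{P,α} = E_{X∼P}[X^α exp(−‖X‖²/(2σ²))] and similarly m_{Q,α}. Then MMD²(P,Q) = Σ_{α ∈ ℕ^d} (1/(α! σ^{2|α|})) (m_{P,α} − m_{Q,α})², so that MMD²(P,Q) = 0 implies m_{P,α} = m_{Q,α} for all multi-indices α, and any single differing weighted moment forces MMD²(P,Q) > 0. -/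
open MeasureTheory
set_option maxHeartbeats 1000000

lemma hasSum_exp_div (r : ℝ) : HasSum (fun n => r ^ n / (n.factorial : ℝ)) (Real.exp r) := by
  rw [Real.exp_eq_exp_ℝ]
  exact NormedSpace.expSeries_div_hasSum_exp r

lemma hasSum_pi_prod : ∀ (d : ℕ) (f : Fin d → ℕ → ℝ), (∀ i, Summable fun n => |f i n|) →
    HasSum (fun α : Fin d → ℕ => ∏ i, f i (α i)) (∏ i, ∑' n, f i n) := by
  intro d
  induction d with
  | zero =>
    intro f _
    have : (fun α : Fin 0 → ℕ => ∏ i, f i (α i)) = fun _ => 1 := by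
      funext α; simp
    rw [this]
    simpa using hasSum_single (f := fun _ : Fin 0 → ℕ => (1:ℝ)) default
      (fun b hb => absurd (Subsingleton.elim b default) hb)
  | succ d ih =>
    intro f hf
    set g : (Fin d → ℕ) → ℝ := fun α => ∏ i, f i.succ (α i) with hg
    have h1 : Summable fun n => ‖f 0 n‖ := by simpa [Real.norm_eq_abs] using hf 0
    have h2 : HasSum g (∏ i : Fin d, ∑' n, f i.succ n) := ih _ (fun i => hf i.succ)
    have h2abs : HasSum (fun α : Fin d → ℕ => ∏ i, |f i.succ (α i)|)
        (∏ i : Fin d, ∑' n, |f i.succ n|) := by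
      have := ih (fun i n => |f i.succ n|) (by
        intro i; simpa [abs_abs] using hf i.succ)
      simpa using this
    have hnorm2 : Summable fun α : Fin d → ℕ => ‖g α‖ := by
      have := h2abs.summable
      simpa [hg, Real.norm_eq_abs, Finset.abs_prod] using this
    have hpair : Summable (fun p : ℕ × (Fin d → ℕ) => f 0 p.1 * g p.2) :=
      summable_mul_of_summable_norm h1 hnorm2
    have htsum : (∑' p : ℕ × (Fin d → ℕ), f 0 p.1 * g p.2)
        = (∑' n, f 0 n) * ∏ i : Fin d, ∑' n, f i.succ n := by
      rw [← tsum_mul_tsum_of_summable_norm h1 hnorm2, h2.tsum_eq]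
    have hpairsum : HasSum (fun p : ℕ × (Fin d → ℕ) => f 0 p.1 * g p.2)
        ((∑' n, f 0 n) * ∏ i : Fin d, ∑' n, f i.succ n) := htsum ▸ hpair.hasSum
    rw [Fin.prod_univ_succ]
    refine (Equiv.hasSum_iff (Fin.consEquiv fun _ : Fin (d+1) => ℕ)).mp ?_
    have : ((fun α : Fin (d+1) → ℕ => ∏ i, f i (α i)) ∘ (Fin.consEquiv fun _ : Fin (d+1) => ℕ))
        = fun p : ℕ × (Fin d → ℕ) => f 0 p.1 * g p.2 := by
      funext p
      simp [hg, Fin.consEquiv, Fin.prod_univ_succ]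
    rw [this]
    exact hpairsum

lemma eunorm_sq {d : ℕ} (x : EuclideanSpace ℝ (Fin d)) : ‖x‖ ^ 2 = ∑ i, x i ^ 2 := by
  rw [EuclideanSpace.norm_eq, Real.sq_sqrt (by positivity)]
  simp [Real.norm_eq_abs, sq_abs]

lemma expand_core {d : ℕ} {σ : ℝ} (hσ : 0 < σ) (t : Fin d → ℝ) :
    HasSum (fun α : Fin d → ℕ =>
        (1 / ((∏ i, ((α i).factorial : ℝ)) * σ ^ (2 * ∑ i, α i))) * ∏ i, t i ^ α i)
      (Real.exp ((∑ i, t i) / σ ^ 2)) := by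
  have hf : ∀ i : Fin d, Summable fun n => |(t i / σ ^ 2) ^ n / (n.factorial : ℝ)| := by
    intro i
    refine ((hasSum_exp_div |t i / σ ^ 2|).summable).congr fun n => ?_
    simp [abs_div, abs_pow, Nat.abs_cast]
  have key := hasSum_pi_prod d (fun i n => (t i / σ ^ 2) ^ n / (n.factorial : ℝ)) hf
  have hval : (∏ i, ∑' n, (t i / σ ^ 2) ^ n / (n.factorial : ℝ))
      = Real.exp ((∑ i, t i) / σ ^ 2) := by
    rw [Finset.sum_div, Real.exp_sum]
    exact Finset.prod_congr rfl fun i _ => (hasSum_exp_div _).tsum_eq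
  rw [hval] at key
  have hfun : (fun α : Fin d → ℕ => ∏ i, (t i / σ ^ 2) ^ (α i) / ((α i).factorial : ℝ))
      = (fun α : Fin d → ℕ =>
        (1 / ((∏ i, ((α i).factorial : ℝ)) * σ ^ (2 * ∑ i, α i))) * ∏ i, t i ^ α i) := by
    funext α
    have hσ' : (σ:ℝ) ≠ 0 := ne_of_gt hσ
    have hfac : (∏ i, ((α i).factorial : ℝ)) ≠ 0 := by positivity
    simp only [div_pow, Finset.prod_div_distrib, Finset.prod_pow_eq_pow_sum, pow_mul]
    field_simp
  rw [hfun] at key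
  exact key

section
variable {d : ℕ} {σ : ℝ}

lemma kernel_factor (hσ : 0 < σ) (x y : EuclideanSpace ℝ (Fin d)) :
    Real.exp (-‖x - y‖ ^ 2 / (2 * σ ^ 2))
      = Real.exp (-‖x‖ ^ 2 / (2 * σ ^ 2)) * Real.exp (-‖y‖ ^ 2 / (2 * σ ^ 2))
        * Real.exp ((∑ i, x i * y i) / σ ^ 2) := by
  rw [← Real.exp_add, ← Real.exp_add]
  congr 1
  have hinner : (inner ℝ x y : ℝ) = ∑ i, x i * y i := by
    simp [PiLp.inner_apply, RCLike.inner_apply, starRingEnd_apply, mul_comm]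
  have hn : ‖x - y‖ ^ 2 = ‖x‖ ^ 2 - 2 * (inner ℝ x y : ℝ) + ‖y‖ ^ 2 := norm_sub_sq_real x y
  rw [hn, hinner]
  have hσ' : σ ≠ 0 := ne_of_gt hσ
  field_simp
  ring

lemma expand_kernel (hσ : 0 < σ) (x y : EuclideanSpace ℝ (Fin d)) :
    HasSum (fun α : Fin d → ℕ =>
        (1 / ((∏ i, ((α i).factorial : ℝ)) * σ ^ (2 * ∑ i, α i))) *
          (((∏ i, x i ^ α i) * Real.exp (-‖x‖ ^ 2 / (2 * σ ^ 2))) *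
            ((∏ i, y i ^ α i) * Real.exp (-‖y‖ ^ 2 / (2 * σ ^ 2)))))
      (Real.exp (-‖x - y‖ ^ 2 / (2 * σ ^ 2))) := by
  have key := (expand_core hσ (fun i => x i * y i)).mul_left
    (Real.exp (-‖x‖ ^ 2 / (2 * σ ^ 2)) * Real.exp (-‖y‖ ^ 2 / (2 * σ ^ 2)))
  rw [kernel_factor hσ x y]
  have hfun : (fun α : Fin d → ℕ => Real.exp (-‖x‖ ^ 2 / (2 * σ ^ 2)) *
        Real.exp (-‖y‖ ^ 2 / (2 * σ ^ 2)) *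
        ((1 / ((∏ i, ((α i).factorial : ℝ)) * σ ^ (2 * ∑ i, α i))) * ∏ i, (x i * y i) ^ α i))
      = (fun α : Fin d → ℕ =>
        (1 / ((∏ i, ((α i).factorial : ℝ)) * σ ^ (2 * ∑ i, α i))) *
          (((∏ i, x i ^ α i) * Real.exp (-‖x‖ ^ 2 / (2 * σ ^ 2))) *
            ((∏ i, y i ^ α i) * Real.exp (-‖y‖ ^ 2 / (2 * σ ^ 2))))) := by
    funext α
    simp only [mul_pow, Finset.prod_mul_distrib]
    ring
  rw [hfun] at key
  exact key

lemma expand_kernel_abs (hσ : 0 < σ) (x y : EuclideanSpace ℝ (Fin d)) :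
    HasSum (fun α : Fin d → ℕ =>
        |(1 / ((∏ i, ((α i).factorial : ℝ)) * σ ^ (2 * ∑ i, α i))) *
          (((∏ i, x i ^ α i) * Real.exp (-‖x‖ ^ 2 / (2 * σ ^ 2))) *
            ((∏ i, y i ^ α i) * Real.exp (-‖y‖ ^ 2 / (2 * σ ^ 2))))|)
      (Real.exp (-‖x‖ ^ 2 / (2 * σ ^ 2)) * Real.exp (-‖y‖ ^ 2 / (2 * σ ^ 2))
        * Real.exp ((∑ i, |x i * y i|) / σ ^ 2)) := by
  have key := (expand_core hσ (fun i => |x i * y i|)).mul_left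
    (Real.exp (-‖x‖ ^ 2 / (2 * σ ^ 2)) * Real.exp (-‖y‖ ^ 2 / (2 * σ ^ 2)))
  have hfun : (fun α : Fin d → ℕ => Real.exp (-‖x‖ ^ 2 / (2 * σ ^ 2)) *
        Real.exp (-‖y‖ ^ 2 / (2 * σ ^ 2)) *
        ((1 / ((∏ i, ((α i).factorial : ℝ)) * σ ^ (2 * ∑ i, α i))) * ∏ i, |x i * y i| ^ α i))
      = (fun α : Fin d → ℕ =>
        |(1 / ((∏ i, ((α i).factorial : ℝ)) * σ ^ (2 * ∑ i, α i))) *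
          (((∏ i, x i ^ α i) * Real.exp (-‖x‖ ^ 2 / (2 * σ ^ 2))) *
            ((∏ i, y i ^ α i) * Real.exp (-‖y‖ ^ 2 / (2 * σ ^ 2))))|) := by
    funext α
    have hc : (0:ℝ) ≤ 1 / ((∏ i, ((α i).factorial : ℝ)) * σ ^ (2 * ∑ i, α i)) := by positivity
    rw [abs_mul, abs_of_nonneg hc, abs_mul, abs_mul, abs_mul,
      abs_of_pos (Real.exp_pos _), abs_of_pos (Real.exp_pos _),
      Finset.abs_prod, Finset.abs_prod]
    simp only [abs_pow, abs_mul, mul_pow, Finset.prod_mul_distrib]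
    ring
  rw [hfun] at key
  exact key

lemma kernel_abs_le_one (hσ : 0 < σ) (x y : EuclideanSpace ℝ (Fin d)) :
    Real.exp (-‖x‖ ^ 2 / (2 * σ ^ 2)) * Real.exp (-‖y‖ ^ 2 / (2 * σ ^ 2))
        * Real.exp ((∑ i, |x i * y i|) / σ ^ 2) ≤ 1 := by
  rw [← Real.exp_add, ← Real.exp_add, Real.exp_le_one_iff]
  have hs : 2 * (∑ i, |x i * y i|) ≤ ‖x‖ ^ 2 + ‖y‖ ^ 2 := by
    rw [eunorm_sq, eunorm_sq, ← Finset.sum_add_distrib, Finset.mul_sum]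
    refine Finset.sum_le_sum fun i _ => ?_
    rw [abs_mul]
    nlinarith [sq_abs (x i), sq_abs (y i), sq_nonneg (|x i| - |y i|)]
  have hσ2 : (0:ℝ) < σ ^ 2 := by positivity
  have heq : -‖x‖ ^ 2 / (2 * σ ^ 2) + -‖y‖ ^ 2 / (2 * σ ^ 2) + (∑ i, |x i * y i|) / σ ^ 2
      = (2 * (∑ i, |x i * y i|) - ‖x‖ ^ 2 - ‖y‖ ^ 2) / (2 * σ ^ 2) := by
    field_simp
    ring
  rw [heq]
  exact div_nonpos_of_nonpos_of_nonneg (by linarith) (by positivity)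

end

section
variable {d : ℕ} {σ : ℝ}

lemma cont_mom {d : ℕ} (σ : ℝ) (α : Fin d → ℕ) :
    Continuous (fun x : EuclideanSpace ℝ (Fin d) =>
      (∏ i, x i ^ α i) * Real.exp (-‖x‖ ^ 2 / (2 * σ ^ 2))) := by
  have hco : ∀ i, Continuous fun x : EuclideanSpace ℝ (Fin d) => x i :=
    fun i => (EuclideanSpace.proj (𝕜 := ℝ) i).continuous
  have h1 : Continuous fun x : EuclideanSpace ℝ (Fin d) => ∏ i, x i ^ α i :=
    continuous_finset_prod _ fun i _ => (hco i).pow _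
  have h2 : Continuous fun x : EuclideanSpace ℝ (Fin d) =>
      Real.exp (-‖x‖ ^ 2 / (2 * σ ^ 2)) :=
    Real.continuous_exp.comp (((continuous_norm.pow 2).neg).div_const _)
  exact h1.mul h2

lemma double_integral (hσ : 0 < σ) (R S : Measure (EuclideanSpace ℝ (Fin d)))
    [IsProbabilityMeasure R] [IsProbabilityMeasure S] :
    HasSum (fun α : Fin d → ℕ =>
        (1 / ((∏ i, ((α i).factorial : ℝ)) * σ ^ (2 * ∑ i, α i))) *
          ((∫ x, (∏ i, x i ^ α i) * Real.exp (-‖x‖ ^ 2 / (2 * σ ^ 2)) ∂ R) *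
            (∫ y, (∏ i, y i ^ α i) * Real.exp (-‖y‖ ^ 2 / (2 * σ ^ 2)) ∂S)))
      (∫ x, ∫ y, Real.exp (-‖x - y‖ ^ 2 / (2 * σ ^ 2)) ∂S ∂ R) := by
  set c : (Fin d → ℕ) → ℝ :=
    fun α => 1 / ((∏ i, ((α i).factorial : ℝ)) * σ ^ (2 * ∑ i, α i)) with hc
  set F : (Fin d → ℕ) → EuclideanSpace ℝ (Fin d) × EuclideanSpace ℝ (Fin d) → ℝ :=
    fun α z => c α *
      (((∏ i, z.1 i ^ α i) * Real.exp (-‖z.1‖ ^ 2 / (2 * σ ^ 2))) *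
        ((∏ i, z.2 i ^ α i) * Real.exp (-‖z.2‖ ^ 2 / (2 * σ ^ 2)))) with hF
  -- continuity of each F α
  have hFc : ∀ α, Continuous (F α) := by
    intro α
    exact continuous_const.mul (((cont_mom σ α).comp continuous_fst).mul
      ((cont_mom σ α).comp continuous_snd))
  have hmeas : ∀ α, AEStronglyMeasurable (F α) (R.prod S) :=
    fun α => (hFc α).aestronglyMeasurable
  -- kernel integrable on product
  have hkc : Continuous fun z : EuclideanSpace ℝ (Fin d) × EuclideanSpace ℝ (Fin d) =>
      Real.exp (-‖z.1 - z.2‖ ^ 2 / (2 * σ ^ 2)) :=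
    Real.continuous_exp.comp
      ((((continuous_fst.sub continuous_snd).norm.pow 2).neg).div_const _)
  have hkint : Integrable (fun z : EuclideanSpace ℝ (Fin d) × EuclideanSpace ℝ (Fin d) =>
      Real.exp (-‖z.1 - z.2‖ ^ 2 / (2 * σ ^ 2))) (R.prod S) := by
    refine (integrable_const (1:ℝ)).mono' hkc.aestronglyMeasurable ?_
    filter_upwards with z
    rw [Real.norm_eq_abs, abs_of_pos (Real.exp_pos _)]
    refine Real.exp_le_one_iff.2 ?_
    have : (0:ℝ) < 2 * σ ^ 2 := by positivity
    exact div_nonpos_of_nonpos_of_nonneg (neg_nonpos.2 (by positivity)) this.le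
  -- lintegral bound
  have hbound : ∑' α, ∫⁻ z, ‖F α z‖₊ ∂(R.prod S) ≠ ⊤ := by
    rw [← lintegral_tsum (fun α => (hmeas α).nnnorm.aemeasurable.coe_nnreal_ennreal)]
    have hle : ∫⁻ z, ∑' α, (‖F α z‖₊ : ENNReal) ∂(R.prod S) ≤ 1 := by
      have h1 : ∫⁻ _, (1 : ENNReal) ∂(R.prod S) = 1 := by simp
      rw [← h1]
      refine lintegral_mono fun z => ?_
      have habs := expand_kernel_abs hσ z.1 z.2
      have hone := kernel_abs_le_one hσ z.1 z.2
      have hnn : ∀ α : Fin d → ℕ, (0:ℝ) ≤ |F α z| := fun α => abs_nonneg _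
      calc ∑' α, (‖F α z‖₊ : ENNReal) = ∑' α, ENNReal.ofReal |F α z| := by
            exact tsum_congr fun α => Real.enorm_eq_ofReal_abs _
        _ = ENNReal.ofReal (∑' α, |F α z|) :=
            (ENNReal.ofReal_tsum_of_nonneg hnn habs.summable).symm
        _ ≤ 1 := by
            rw [habs.tsum_eq, ← ENNReal.ofReal_one]
            exact ENNReal.ofReal_le_ofReal hone
    exact (lt_of_le_of_lt hle ENNReal.one_lt_top).ne
  -- swap
  have hswap : ∫ z, (∑' α, F α z) ∂(R.prod S) = ∑' α, ∫ z, F α z ∂(R.prod S) :=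
    integral_tsum hmeas hbound
  -- each term
  have hterm : ∀ α, ∫ z, F α z ∂(R.prod S)
      = c α * ((∫ x, (∏ i, x i ^ α i) * Real.exp (-‖x‖ ^ 2 / (2 * σ ^ 2)) ∂ R) *
          (∫ y, (∏ i, y i ^ α i) * Real.exp (-‖y‖ ^ 2 / (2 * σ ^ 2)) ∂S)) := by
    intro α
    rw [hF]
    simp only []
    rw [MeasureTheory.integral_const_mul]
    congr 1
    exact integral_prod_mul (μ := R) (ν := S)
      (fun x => (∏ i, x i ^ α i) * Real.exp (-‖x‖ ^ 2 / (2 * σ ^ 2)))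
      (fun y => (∏ i, y i ^ α i) * Real.exp (-‖y‖ ^ 2 / (2 * σ ^ 2)))
  -- summability of term integrals
  have hsummable : Summable fun α => ∫ z, F α z ∂(R.prod S) := by
    refine Summable.of_norm ?_
    refine Summable.of_nonneg_of_le (fun α => norm_nonneg _)
      (fun α => ?_) (ENNReal.summable_toReal hbound)
    calc ‖∫ z, F α z ∂(R.prod S)‖
        ≤ (∫⁻ z, ENNReal.ofReal ‖F α z‖ ∂(R.prod S)).toReal :=
          norm_integral_le_lintegral_norm _
      _ = (∫⁻ z, (‖F α z‖₊ : ENNReal) ∂(R.prod S)).toReal := by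
          exact congrArg ENNReal.toReal (lintegral_congr fun z => ofReal_norm (F α z))
  -- iterated = product integral
  have hiter : ∫ x, ∫ y, Real.exp (-‖x - y‖ ^ 2 / (2 * σ ^ 2)) ∂S ∂ R
      = ∫ z, Real.exp (-‖z.1 - z.2‖ ^ 2 / (2 * σ ^ 2)) ∂(R.prod S) :=
    integral_integral (f := fun x y : EuclideanSpace ℝ (Fin d) => Real.exp (-‖x - y‖ ^ 2 / (2 * σ ^ 2))) hkint
  have hexp : ∀ z : EuclideanSpace ℝ (Fin d) × EuclideanSpace ℝ (Fin d),
      Real.exp (-‖z.1 - z.2‖ ^ 2 / (2 * σ ^ 2)) = ∑' α, F α z :=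
    fun z => (expand_kernel hσ z.1 z.2).tsum_eq.symm
  have htotal : ∫ x, ∫ y, Real.exp (-‖x - y‖ ^ 2 / (2 * σ ^ 2)) ∂S ∂ R
      = ∑' α, ∫ z, F α z ∂(R.prod S) := by
    rw [hiter]
    rw [show (fun z : EuclideanSpace ℝ (Fin d) × EuclideanSpace ℝ (Fin d) =>
      Real.exp (-‖z.1 - z.2‖ ^ 2 / (2 * σ ^ 2))) = fun z => ∑' α, F α z from funext hexp]
    exact hswap
  have hfin := hsummable.hasSum
  rw [← htotal] at hfin
  rwa [show (fun α : Fin d → ℕ => ∫ z, F α z ∂(R.prod S))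
      = (fun α : Fin d → ℕ => c α *
        ((∫ x, (∏ i, x i ^ α i) * Real.exp (-‖x‖ ^ 2 / (2 * σ ^ 2)) ∂ R) *
          (∫ y, (∏ i, y i ^ α i) * Real.exp (-‖y‖ ^ 2 / (2 * σ ^ 2)) ∂S)))
      from funext hterm] at hfin


/-- Moment expansion of the Gaussian-kernel squared MMD: it is a positively weighted
sum of squared differences of exponentially weighted moments; hence it vanishes iff
all weighted moments agree, and any differing weighted moment forces it positive. -/
theorem stmt_19 {d : ℕ} (σ : ℝ) (hσ : 0 < σ)
    (P Q : Measure (EuclideanSpace ℝ (Fin d)))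
    [IsProbabilityMeasure P] [IsProbabilityMeasure Q]
    (hP : ∀ n : ℕ, Integrable (fun x => ‖x‖ ^ n) P)
    (hQ : ∀ n : ℕ, Integrable (fun x => ‖x‖ ^ n) Q) :
    let k : EuclideanSpace ℝ (Fin d) → EuclideanSpace ℝ (Fin d) → ℝ :=
      fun x y => Real.exp (-‖x - y‖ ^ 2 / (2 * σ ^ 2))
    let m : Measure (EuclideanSpace ℝ (Fin d)) → (Fin d → ℕ) → ℝ :=
      fun R α => ∫ x, (∏ i, x i ^ α i) * Real.exp (-‖x‖ ^ 2 / (2 * σ ^ 2)) ∂ R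
    let mmd2 : ℝ :=
      (∫ x, ∫ x', k x x' ∂P ∂P) - 2 * (∫ x, ∫ y, k x y ∂Q ∂P)
        + (∫ y, ∫ y', k y y' ∂Q ∂Q)
    (mmd2 = ∑' α : Fin d → ℕ,
        (1 / ((∏ i, (Nat.factorial (α i) : ℝ)) * σ ^ (2 * ∑ i, α i))) *
          (m P α - m Q α) ^ 2) ∧
      (mmd2 = 0 → ∀ α : Fin d → ℕ, m P α = m Q α) ∧
      ((∃ α : Fin d → ℕ, m P α ≠ m Q α) → 0 < mmd2) := by
  intro k m mmd2
  have hPP := double_integral hσ P P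
  have hPQ := double_integral hσ P Q
  have hQQ := double_integral hσ Q Q
  have hcpos : ∀ α : Fin d → ℕ,
      (0:ℝ) < 1 / ((∏ i, ((α i).factorial : ℝ)) * σ ^ (2 * ∑ i, α i)) :=
    fun α => one_div_pos.2 (mul_pos (by positivity) (pow_pos hσ _))
  have hcomb := (hPP.sub (hPQ.mul_left 2)).add hQQ
  have hfun : (fun α : Fin d → ℕ =>
      (1 / ((∏ i, ((α i).factorial : ℝ)) * σ ^ (2 * ∑ i, α i))) * (m P α * m P α)
      - 2 * ((1 / ((∏ i, ((α i).factorial : ℝ)) * σ ^ (2 * ∑ i, α i))) * (m P α * m Q α))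
      + (1 / ((∏ i, ((α i).factorial : ℝ)) * σ ^ (2 * ∑ i, α i))) * (m Q α * m Q α))
      = fun α : Fin d → ℕ =>
        (1 / ((∏ i, ((α i).factorial : ℝ)) * σ ^ (2 * ∑ i, α i))) * (m P α - m Q α) ^ 2 := by
    funext α
    ring
  rw [hfun] at hcomb
  have key : HasSum (fun α : Fin d → ℕ =>
      (1 / ((∏ i, ((α i).factorial : ℝ)) * σ ^ (2 * ∑ i, α i))) * (m P α - m Q α) ^ 2)
      mmd2 := hcomb
  have hnonneg : ∀ α : Fin d → ℕ, (0:ℝ) ≤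
      (1 / ((∏ i, ((α i).factorial : ℝ)) * σ ^ (2 * ∑ i, α i))) * (m P α - m Q α) ^ 2 :=
    fun α => mul_nonneg (hcpos α).le (sq_nonneg _)
  refine ⟨key.tsum_eq.symm, ?_, ?_⟩
  · intro h0 α
    have hle : (1 / ((∏ i, ((α i).factorial : ℝ)) * σ ^ (2 * ∑ i, α i))) *
        (m P α - m Q α) ^ 2 ≤ mmd2 := by
      rw [← key.tsum_eq]
      exact Summable.le_tsum key.summable α (fun β _ => hnonneg β)
    have heq0 : (1 / ((∏ i, ((α i).factorial : ℝ)) * σ ^ (2 * ∑ i, α i))) *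
        (m P α - m Q α) ^ 2 = 0 := le_antisymm (h0 ▸ hle) (hnonneg α)
    have hsq : (m P α - m Q α) ^ 2 = 0 := by
      rcases mul_eq_zero.1 heq0 with h | h
      · exact absurd h (ne_of_gt (hcpos α))
      · exact h
    have := pow_eq_zero_iff (n := 2) (by norm_num) |>.1 hsq
    linarith [sub_eq_zero.1 this]
  · rintro ⟨α, hα⟩
    have hsqpos : 0 < (m P α - m Q α) ^ 2 :=
      lt_of_le_of_ne (sq_nonneg _) (Ne.symm (pow_ne_zero 2 (sub_ne_zero.2 hα)))
    have hpos : 0 < (1 / ((∏ i, ((α i).factorial : ℝ)) * σ ^ (2 * ∑ i, α i))) *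
        (m P α - m Q α) ^ 2 := mul_pos (hcpos α) hsqpos
    calc (0:ℝ) < _ := hpos
      _ ≤ ∑' α : Fin d → ℕ,
          (1 / ((∏ i, ((α i).factorial : ℝ)) * σ ^ (2 * ∑ i, α i))) * (m P α - m Q α) ^ 2 :=
        Summable.le_tsum key.summable α (fun β _ => hnonneg β)
      _ = mmd2 := key.tsum_eq
end
end
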